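/- With the notation of the previous context, defining ℓ(Q,Q') = ∫_𝒲 ‖Q(w) − Q'(w)‖_TV dP_W(w), one has E[t(W,Y)] ≥ ℓ(Q_{f₁}, Q_{f₂}) − ℓ(Q*, Q_{f₂}), where t(w,y) = 1{q_{f₂(w)}(y) > q_{f₁(w)}(y)} − Q_{f₁(w)}({q_{f₂(w)} > q_{f₁(w)}}). -/

import Mathlib

open MeasureTheory ProbabilityTheory
open scoped NNReal ENNReal

/-- Total variation distance between two measures. -/
noncomputable def tvDist {E : Type*} [MeasurableSpace E] (P Q : Measure E) : ℝ :=
  ⨆ A : {s : Set E // MeasurableSet s}, ((P A).toReal - (Q A).toReal)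

section basic
variable {E : Type*} [MeasurableSpace E] (P Q : Measure E)

lemma tvDist_bdd [IsProbabilityMeasure P] :
    BddAbove (Set.range fun A : {s : Set E // MeasurableSet s} =>
      ((P A).toReal - (Q A).toReal)) := by
  refine ⟨1, ?_⟩
  rintro x ⟨A, rfl⟩
  dsimp only
  have h1 : (P (A : Set E)).toReal ≤ 1 := by
    rw [← ENNReal.toReal_one]
    exact ENNReal.toReal_mono ENNReal.one_ne_top prob_le_one
  have h2 : 0 ≤ (Q (A : Set E)).toReal := ENNReal.toReal_nonneg
  linarith

lemma le_tvDist [IsProbabilityMeasure P] {s : Set E} (hs : MeasurableSet s) :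
    (P s).toReal - (Q s).toReal ≤ tvDist P Q :=
  le_ciSup (tvDist_bdd P Q) ⟨s, hs⟩

lemma toReal_compl [IsProbabilityMeasure P] {s : Set E} (hs : MeasurableSet s) :
    (P sᶜ).toReal = 1 - (P s).toReal := by
  rw [prob_compl_eq_one_sub hs, ENNReal.toReal_sub_of_le prob_le_one ENNReal.one_ne_top,
    ENNReal.toReal_one]

lemma compl_le_tvDist [IsProbabilityMeasure P] [IsProbabilityMeasure Q]
    {s : Set E} (hs : MeasurableSet s) :
    (Q s).toReal - (P s).toReal ≤ tvDist P Q := by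
  have := le_tvDist P Q hs.compl
  rwa [toReal_compl P hs, toReal_compl Q hs, sub_sub_sub_cancel_left] at this

lemma tvDist_nonneg [IsProbabilityMeasure P] : 0 ≤ tvDist P Q := by
  have := le_tvDist P Q MeasurableSet.empty
  simpa using this

lemma tvDist_le_one [IsProbabilityMeasure P] : tvDist P Q ≤ 1 := by
  refine ciSup_le fun A => ?_
  have h1 : (P (A : Set E)).toReal ≤ 1 := by
    rw [← ENNReal.toReal_one]
    exact ENNReal.toReal_mono ENNReal.one_ne_top prob_le_one
  have h2 : 0 ≤ (Q (A : Set E)).toReal := ENNReal.toReal_nonneg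
  linarith

end basic
open MeasureTheory ProbabilityTheory
open scoped NNReal ENNReal

section formula
variable {E : Type*} [MeasurableSpace E]

lemma measure_le_formula (μ ν : Measure E) [IsFiniteMeasure μ] [IsFiniteMeasure ν]
    [μ.HaveLebesgueDecomposition ν] {B : Set E} (hB : MeasurableSet B) :
    μ B ≤ ν B + (μ.singularPart ν Set.univ + ∫⁻ x, (μ.rnDeriv ν x - 1) ∂ν) := by
  have hρ : Measurable (μ.rnDeriv ν) := Measure.measurable_rnDeriv μ ν
  conv_lhs => rw [μ.haveLebesgueDecomposition_add ν]
  rw [Measure.add_apply, withDensity_apply _ hB]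
  have h1 : μ.singularPart ν B ≤ μ.singularPart ν Set.univ :=
    measure_mono (Set.subset_univ _)
  have h2 : ∫⁻ x in B, μ.rnDeriv ν x ∂ν ≤ ν B + ∫⁻ x, (μ.rnDeriv ν x - 1) ∂ν := by
    calc ∫⁻ x in B, μ.rnDeriv ν x ∂ν
        ≤ ∫⁻ x in B, ((μ.rnDeriv ν x - 1) + 1) ∂ν :=
          lintegral_mono fun x => le_tsub_add
      _ = (∫⁻ x in B, (μ.rnDeriv ν x - 1) ∂ν) + ν B := by
          rw [lintegral_add_right _ measurable_const, setLIntegral_one]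
      _ ≤ (∫⁻ x, (μ.rnDeriv ν x - 1) ∂ν) + ν B :=
          add_le_add_left (setLIntegral_le_lintegral _ _) _
      _ = ν B + ∫⁻ x, (μ.rnDeriv ν x - 1) ∂ν := add_comm _ _
  calc μ.singularPart ν B + ∫⁻ x in B, μ.rnDeriv ν x ∂ν
      ≤ μ.singularPart ν Set.univ + (ν B + ∫⁻ x, (μ.rnDeriv ν x - 1) ∂ν) :=
        add_le_add h1 h2
    _ = ν B + (μ.singularPart ν Set.univ + ∫⁻ x, (μ.rnDeriv ν x - 1) ∂ν) := by ring

lemma formula_ne_top (μ ν : Measure E) [IsFiniteMeasure μ] [IsFiniteMeasure ν]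
    [μ.HaveLebesgueDecomposition ν] :
    μ.singularPart ν Set.univ + ∫⁻ x, (μ.rnDeriv ν x - 1) ∂ν ≠ ⊤ := by
  have h1 : μ.singularPart ν Set.univ ≤ μ Set.univ :=
    Measure.le_iff'.mp (Measure.singularPart_le μ ν) _
  have h2 : ∫⁻ x, (μ.rnDeriv ν x - 1) ∂ν ≤ μ Set.univ := by
    calc ∫⁻ x, (μ.rnDeriv ν x - 1) ∂ν ≤ ∫⁻ x, μ.rnDeriv ν x ∂ν :=
          lintegral_mono fun x => tsub_le_self
      _ = ν.withDensity (μ.rnDeriv ν) Set.univ := by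
          rw [withDensity_apply _ MeasurableSet.univ, Measure.restrict_univ]
      _ ≤ μ Set.univ := Measure.le_iff'.mp (Measure.withDensity_rnDeriv_le μ ν) _
  exact ne_top_of_le_ne_top (by finiteness) (add_le_add h1 h2)

end formula

section formula2
variable {E : Type*} [MeasurableSpace E]

lemma exists_witness (μ ν : Measure E) [IsFiniteMeasure μ] [IsFiniteMeasure ν]
    [μ.HaveLebesgueDecomposition ν] :
    ∃ A : Set E, MeasurableSet A ∧
      μ A = ν A + (μ.singularPart ν Set.univ + ∫⁻ x, (μ.rnDeriv ν x - 1) ∂ν) := by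
  set ρ := μ.rnDeriv ν with hρdef
  have hρ : Measurable ρ := Measure.measurable_rnDeriv μ ν
  set T : Set E := {x | 1 < ρ x} with hTdef
  have hT : MeasurableSet T := measurableSet_lt measurable_const hρ
  obtain ⟨s, hsm, hs0, hsc⟩ := μ.mutuallySingular_singularPart ν
  refine ⟨(T ∩ s) ∪ sᶜ, ((hT.inter hsm).union hsm.compl), ?_⟩
  set A : Set E := (T ∩ s) ∪ sᶜ with hAdef
  have hAT : A =ᵐ[ν] T := by
    rw [MeasureTheory.ae_eq_set]
    constructor
    · refine measure_mono_null (fun x hx => ?_) hsc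
      rcases hx.1 with h | h
      · exact absurd h.1 hx.2
      · exact h
    · refine measure_mono_null (fun x hx => ?_) hsc
      intro hxs
      exact hx.2 (Or.inl ⟨hx.1, hxs⟩)
  -- singular part of A equals total mass
  have hsingA : μ.singularPart ν A = μ.singularPart ν Set.univ := by
    refine le_antisymm (measure_mono (Set.subset_univ _)) ?_
    have h1 : μ.singularPart ν sᶜ ≤ μ.singularPart ν A :=
      measure_mono Set.subset_union_right
    have h2 : μ.singularPart ν Set.univ ≤ μ.singularPart ν s + μ.singularPart ν sᶜ := by
      rw [← Set.union_compl_self s]; exact measure_union_le _ _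
    rw [hs0, zero_add] at h2
    exact h2.trans h1
  have hlint : ∫⁻ x in A, ρ x ∂ν = (∫⁻ x, (ρ x - 1) ∂ν) + ν T := by
    rw [Measure.restrict_congr_set hAT]
    have h1 : ∫⁻ x in T, ρ x ∂ν = ∫⁻ x in T, ((ρ x - 1) + 1) ∂ν := by
      refine setLIntegral_congr_fun hT (fun x hx => ?_)
      exact (tsub_add_cancel_of_le (le_of_lt hx)).symm
    rw [h1, lintegral_add_right _ measurable_const, setLIntegral_one]
    congr 1
    conv_rhs => rw [← lintegral_add_compl (fun x => ρ x - 1) hT]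
    have h2 : ∫⁻ x in Tᶜ, (ρ x - 1) ∂ν = 0 := by
      rw [setLIntegral_congr_fun hT.compl (fun x hx => ?_), lintegral_zero]
      exact tsub_eq_zero_of_le (not_lt.mp hx)
    rw [h2, add_zero]
  have hνA : ν A = ν T := measure_congr hAT
  conv_lhs => rw [μ.haveLebesgueDecomposition_add ν]
  rw [Measure.add_apply, withDensity_apply _ (((hT.inter hsm).union hsm.compl)), hsingA,
    ← hAdef, hlint, hνA]
  ring

lemma tvDist_eq (μ ν : Measure E) [IsProbabilityMeasure μ] [IsProbabilityMeasure ν]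
    [μ.HaveLebesgueDecomposition ν] :
    tvDist μ ν = (μ.singularPart ν Set.univ + ∫⁻ x, (μ.rnDeriv ν x - 1) ∂ν).toReal := by
  have hne := formula_ne_top μ ν
  apply le_antisymm
  · refine ciSup_le fun B => ?_
    have h := measure_le_formula μ ν B.2
    have h' : (μ (B : Set E)).toReal ≤ (ν (B : Set E)).toReal
        + (μ.singularPart ν Set.univ + ∫⁻ x, (μ.rnDeriv ν x - 1) ∂ν).toReal := by
      have := ENNReal.toReal_mono (by finiteness) h
      rwa [ENNReal.toReal_add (measure_ne_top _ _) hne] at this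
    linarith
  · obtain ⟨A, hA, hAeq⟩ := exists_witness μ ν
    have h := le_tvDist μ ν hA
    rw [hAeq, ENNReal.toReal_add (measure_ne_top _ _) hne] at h
    linarith

end formula2
section kernels
variable {W : Type*} [MeasurableSpace W]

lemma measurable_tvDist_kernel (κ η : Kernel W ℝ) [IsMarkovKernel κ] [IsMarkovKernel η] :
    Measurable fun w => tvDist (κ w) (η w) := by
  have heq : ∀ w, tvDist (κ w) (η w) =
      ((Kernel.singularPart κ η w Set.univ)
        + ∫⁻ x, (Kernel.rnDeriv κ η w x - 1) ∂(η w)).toReal := by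
    intro w
    rw [tvDist_eq, Kernel.singularPart_eq_singularPart_measure (κ := κ) (η := η) (a := w)]
    congr 2
    refine lintegral_congr_ae (((Kernel.rnDeriv_eq_rnDeriv_measure (κ := κ) (η := η)
      (a := w))).mono fun x hx => ?_)
    simp only [hx]
  simp only [heq]
  refine Measurable.ennreal_toReal (Measurable.add ?_ ?_)
  · exact (Kernel.singularPart κ η).measurable_coe MeasurableSet.univ
  · exact Measurable.lintegral_kernel_prod_right'
      ((Kernel.measurable_rnDeriv κ η).sub measurable_const)

lemma measurable_gaussianPDFReal_joint {f : W → ℝ} (hf : Measurable f) (v : ℝ≥0) :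
    Measurable fun p : W × ℝ => gaussianPDFReal (f p.1) v p.2 := by
  unfold gaussianPDFReal
  exact (((measurable_snd.sub (hf.comp measurable_fst)).pow_const 2).neg.div_const
    _).exp.const_mul _

noncomputable def gaussKer (f : W → ℝ) (hf : Measurable f) (v : ℝ≥0) (hv : v ≠ 0) :
    Kernel W ℝ where
  toFun := fun w => gaussianReal (f w) v
  measurable' := by
    refine Measure.measurable_of_measurable_coe _ fun s hs => ?_
    have key : ∀ w, gaussianReal (f w) v s = ∫⁻ x, (Prod.snd ⁻¹' s).indicator
        (fun p : W × ℝ => gaussianPDF (f p.1) v p.2) (w, x) ∂volume := by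
      intro w
      rw [gaussianReal_apply _ hv s, ← lintegral_indicator hs]
      exact lintegral_congr fun x => by by_cases hx : x ∈ s <;>
        simp [Set.indicator_apply, hx]
    simp only [key]
    exact Measurable.lintegral_prod_right'
      (((measurable_gaussianPDFReal_joint hf v).ennreal_ofReal).indicator
        (measurable_snd hs))

lemma gaussKer_apply (f : W → ℝ) (hf : Measurable f) (v : ℝ≥0) (hv : v ≠ 0) (w : W) :
    gaussKer f hf v hv w = gaussianReal (f w) v := rfl

instance (f : W → ℝ) (hf : Measurable f) (v : ℝ≥0) (hv : v ≠ 0) :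
    IsMarkovKernel (gaussKer f hf v hv) :=
  ⟨fun w => by rw [gaussKer_apply]; infer_instance⟩

end kernels
section gauss

lemma toReal_gaussianReal (m : ℝ) {v : ℝ≥0} (hv : v ≠ 0) (S : Set ℝ) :
    ((gaussianReal m v) S).toReal = ∫ x in S, gaussianPDFReal m v x := by
  rw [gaussianReal_apply_eq_integral _ hv S, ENNReal.toReal_ofReal
    (integral_nonneg fun x => gaussianPDFReal_nonneg _ _ _)]

lemma gauss_tv_le (m₁ m₂ : ℝ) {v : ℝ≥0} (hv : v ≠ 0) {B : Set ℝ} (hB : MeasurableSet B) :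
    ((gaussianReal m₁ v) B).toReal - ((gaussianReal m₂ v) B).toReal ≤
      ((gaussianReal m₂ v) {y | gaussianPDFReal m₁ v y < gaussianPDFReal m₂ v y}).toReal
        - ((gaussianReal m₁ v) {y | gaussianPDFReal m₁ v y < gaussianPDFReal m₂ v y}).toReal := by
  set q₁ := gaussianPDFReal m₁ v with hq₁
  set q₂ := gaussianPDFReal m₂ v with hq₂
  set A : Set ℝ := {y | q₁ y < q₂ y} with hAdef
  have hA : MeasurableSet A :=
    measurableSet_lt (measurable_gaussianPDFReal _ _) (measurable_gaussianPDFReal _ _)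
  have hint1 : Integrable q₁ := integrable_gaussianPDFReal _ _
  have hint2 : Integrable q₂ := integrable_gaussianPDFReal _ _
  have hd : Integrable (fun x => q₁ x - q₂ x) := hint1.sub hint2
  rw [toReal_gaussianReal _ hv B, toReal_gaussianReal _ hv B, toReal_gaussianReal _ hv A,
    toReal_gaussianReal _ hv A,
    ← integral_sub hint1.integrableOn hint2.integrableOn,
    ← integral_sub hint2.integrableOn hint1.integrableOn]
  -- reduce to: ∫ x in B, (q₁ x - q₂ x) ≤ ∫ x in A, (q₂ x - q₁ x)
  have htotal : ∫ x, (q₁ x - q₂ x) = 0 := by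
    rw [integral_sub hint1 hint2, integral_gaussianPDFReal_eq_one _ hv,
      integral_gaussianPDFReal_eq_one _ hv, sub_self]
  have hcompl : ∫ x in Aᶜ, (q₁ x - q₂ x) = ∫ x in A, (q₂ x - q₁ x) := by
    have := integral_add_compl hA hd
    rw [htotal] at this
    have h2 : ∫ x in A, (q₂ x - q₁ x) = - ∫ x in A, (q₁ x - q₂ x) := by
      rw [← integral_neg]
      exact integral_congr_ae (ae_of_all _ fun x => by ring)
    linarith
  have step1 : ∫ x in B, (q₁ x - q₂ x) ≤ ∫ x in B ∩ Aᶜ, (q₁ x - q₂ x) := by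
    have hunion : (B ∩ Aᶜ) ∪ (B ∩ A) = B := by
      rw [← Set.inter_union_distrib_left, Set.compl_union_self, Set.inter_univ]
    have hsplit := setIntegral_union (f := fun x => q₁ x - q₂ x) (μ := volume)
      (s := B ∩ Aᶜ) (t := B ∩ A)
      (Disjoint.mono Set.inter_subset_right Set.inter_subset_right disjoint_compl_left)
      (hB.inter hA) hd.integrableOn hd.integrableOn
    rw [hunion] at hsplit
    have hneg : ∫ x in B ∩ A, (q₁ x - q₂ x) ≤ 0 := by
      refine setIntegral_nonpos (hB.inter hA) fun x hx => ?_
      have : q₁ x < q₂ x := hx.2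
      linarith
    linarith
  have step2 : ∫ x in B ∩ Aᶜ, (q₁ x - q₂ x) ≤ ∫ x in Aᶜ, (q₁ x - q₂ x) := by
    have hunion : (B ∩ Aᶜ) ∪ (Aᶜ \ B) = Aᶜ := by
      rw [Set.inter_comm, Set.inter_union_diff]
    have hsplit := setIntegral_union (f := fun x => q₁ x - q₂ x) (μ := volume)
      (s := B ∩ Aᶜ) (t := Aᶜ \ B)
      (Disjoint.mono Set.inter_subset_left (Set.diff_subset_compl _ _) disjoint_compl_right)
      (hA.compl.diff hB) hd.integrableOn hd.integrableOn
    rw [hunion] at hsplit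
    have hnn : 0 ≤ ∫ x in Aᶜ \ B, (q₁ x - q₂ x) := by
      refine setIntegral_nonneg (hA.compl.diff hB) fun x hx => ?_
      have : ¬ (q₁ x < q₂ x) := hx.1
      linarith [not_lt.mp this]
    linarith
  linarith [hcompl ▸ (step1.trans step2)]

end gauss
/-- With `ℓ(Q,Q') = ∫ ‖Q(w) − Q'(w)‖_TV dP_W(w)`, the test statistic satisfies
`E[t(W,Y)] ≥ ℓ(Q_{f₁}, Q_{f₂}) − ℓ(Q*, Q_{f₂})`. -/
theorem expectation_t_ge {W : Type*} [MeasurableSpace W]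
    (P_W : Measure W) [IsProbabilityMeasure P_W]
    (Qstar : Kernel W ℝ) [IsMarkovKernel Qstar]
    (f₁ f₂ : W → ℝ) (hf₁ : Measurable f₁) (hf₂ : Measurable f₂)
    (σ : ℝ) (hσ : 0 < σ) :
    (∫ w, ∫ y,
        ((if gaussianPDFReal (f₁ w) (Real.toNNReal (σ ^ 2)) y
              < gaussianPDFReal (f₂ w) (Real.toNNReal (σ ^ 2)) y then (1 : ℝ) else 0)
          - ((gaussianReal (f₁ w) (Real.toNNReal (σ ^ 2)))
              {y' | gaussianPDFReal (f₁ w) (Real.toNNReal (σ ^ 2)) y'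
                    < gaussianPDFReal (f₂ w) (Real.toNNReal (σ ^ 2)) y'}).toReal)
        ∂(Qstar w) ∂P_W)
      ≥ (∫ w, tvDist (gaussianReal (f₁ w) (Real.toNNReal (σ ^ 2)))
              (gaussianReal (f₂ w) (Real.toNNReal (σ ^ 2))) ∂P_W)
        - ∫ w, tvDist (Qstar w) (gaussianReal (f₂ w) (Real.toNNReal (σ ^ 2))) ∂P_W := by
  set v : ℝ≥0 := Real.toNNReal (σ ^ 2) with hvdef
  have hv : v ≠ 0 := by
    simp only [hvdef, ne_eq, Real.toNNReal_eq_zero, not_le]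
    positivity
  set A : W → Set ℝ :=
    fun w => {y | gaussianPDFReal (f₁ w) v y < gaussianPDFReal (f₂ w) v y} with hAdef
  have hAw : ∀ w, MeasurableSet (A w) := fun w =>
    measurableSet_lt (measurable_gaussianPDFReal _ _) (measurable_gaussianPDFReal _ _)
  have h𝒜 : MeasurableSet {p : W × ℝ |
      gaussianPDFReal (f₁ p.1) v p.2 < gaussianPDFReal (f₂ p.1) v p.2} :=
    measurableSet_lt (measurable_gaussianPDFReal_joint hf₁ v)
      (measurable_gaussianPDFReal_joint hf₂ v)
  -- abbreviations
  have prob_toReal_le_one : ∀ (μ : Measure ℝ) (_ : IsProbabilityMeasure μ) (s : Set ℝ),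
      (μ s).toReal ≤ 1 := by
    intro μ hμ s
    rw [← ENNReal.toReal_one]
    exact ENNReal.toReal_mono ENNReal.one_ne_top prob_le_one
  -- the three functions
  set G1 : W → ℝ := fun w => tvDist (gaussianReal (f₁ w) v) (gaussianReal (f₂ w) v) with hG1def
  set G2 : W → ℝ := fun w => tvDist (Qstar w) (gaussianReal (f₂ w) v) with hG2def
  set H : W → ℝ :=
    fun w => (Qstar w (A w)).toReal - ((gaussianReal (f₁ w) v) (A w)).toReal with hHdef
  -- inner integral equals H
  have hinner : ∀ w, (∫ y,
      ((if gaussianPDFReal (f₁ w) v y < gaussianPDFReal (f₂ w) v y then (1 : ℝ) else 0)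
        - ((gaussianReal (f₁ w) v)
            {y' | gaussianPDFReal (f₁ w) v y' < gaussianPDFReal (f₂ w) v y'}).toReal)
      ∂(Qstar w)) = H w := by
    intro w
    have hind : ∀ y,
        (if gaussianPDFReal (f₁ w) v y < gaussianPDFReal (f₂ w) v y then (1 : ℝ) else 0)
        = (A w).indicator (fun _ => (1 : ℝ)) y := fun y => by
      simp only [Set.indicator_apply, hAdef, Set.mem_setOf_eq]
    have hint : Integrable ((A w).indicator (fun _ => (1 : ℝ))) (Qstar w) :=
      (integrable_const (1 : ℝ)).indicator (hAw w)
    rw [show {y' | gaussianPDFReal (f₁ w) v y' < gaussianPDFReal (f₂ w) v y'} = A w from rfl]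
    simp only [hind]
    rw [integral_sub hint (integrable_const _), integral_const, measureReal_def, measure_univ,
      integral_indicator (hAw w), setIntegral_const]
    simp [hHdef, measureReal_def]
  -- measurability and integrability
  have hG1meas : Measurable G1 := by
    have := measurable_tvDist_kernel (gaussKer f₁ hf₁ v hv) (gaussKer f₂ hf₂ v hv)
    simpa only [gaussKer_apply] using this
  have hG2meas : Measurable G2 := by
    have := measurable_tvDist_kernel Qstar (gaussKer f₂ hf₂ v hv)
    simpa only [gaussKer_apply] using this
  have hQA : Measurable fun w => (Qstar w (A w)).toReal := by
    have := (Kernel.measurable_kernel_prodMk_left (κ := Qstar) h𝒜).ennreal_toReal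
    exact this
  have hPA : Measurable fun w => ((gaussianReal (f₁ w) v) (A w)).toReal := by
    have := (Kernel.measurable_kernel_prodMk_left (κ := gaussKer f₁ hf₁ v hv)
      h𝒜).ennreal_toReal
    exact this
  have hHmeas : Measurable H := hQA.sub hPA
  have integ : ∀ {g : W → ℝ}, Measurable g → (∀ w, |g w| ≤ 1) → Integrable g P_W := by
    intro g hg hb
    refine Integrable.mono' (integrable_const 1) hg.aestronglyMeasurable
      (ae_of_all _ fun w => ?_)
    rw [Real.norm_eq_abs]
    exact hb w
  have hG1int : Integrable G1 P_W := integ hG1meas fun w => abs_le.mpr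
    ⟨by linarith [tvDist_nonneg (gaussianReal (f₁ w) v) (gaussianReal (f₂ w) v)],
     tvDist_le_one _ _⟩
  have hG2int : Integrable G2 P_W := integ hG2meas fun w => abs_le.mpr
    ⟨by linarith [tvDist_nonneg (Qstar w) (gaussianReal (f₂ w) v)], tvDist_le_one _ _⟩
  have hHint : Integrable H P_W := integ hHmeas fun w => abs_le.mpr
    ⟨by
      have h1 := prob_toReal_le_one (gaussianReal (f₁ w) v) inferInstance (A w)
      have h2 : (0:ℝ) ≤ (Qstar w (A w)).toReal := ENNReal.toReal_nonneg
      simp only [hHdef]; linarith,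
     by
      have h1 := prob_toReal_le_one (Qstar w) inferInstance (A w)
      have h2 : (0:ℝ) ≤ ((gaussianReal (f₁ w) v) (A w)).toReal := ENNReal.toReal_nonneg
      simp only [hHdef]; linarith⟩
  -- pointwise inequality
  have hpoint : ∀ w, G1 w - G2 w ≤ H w := by
    intro w
    have key : G1 w ≤ H w + G2 w := by
      refine ciSup_le fun B => ?_
      have h1 := gauss_tv_le (f₁ w) (f₂ w) hv B.2
      have h2 := compl_le_tvDist (Qstar w) (gaussianReal (f₂ w) v) (hAw w)
      simp only [hHdef, hG2def, hAdef] at *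
      linarith
    linarith
  -- assemble
  rw [ge_iff_le, ← integral_sub hG1int hG2int]
  have hcongr : ∫ w, ∫ y,
      ((if gaussianPDFReal (f₁ w) v y < gaussianPDFReal (f₂ w) v y then (1 : ℝ) else 0)
        - ((gaussianReal (f₁ w) v)
            {y' | gaussianPDFReal (f₁ w) v y' < gaussianPDFReal (f₂ w) v y'}).toReal)
      ∂(Qstar w) ∂P_W = ∫ w, H w ∂P_W :=
    integral_congr_ae (ae_of_all _ hinner)
  rw [hcongr]
  exact integral_mono (hG1int.sub hG2int) hHint hpoint
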